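/- If γ₁, γ₂ are independent standard Gaussian random variables and ρ ∈ [-1,1], then P[γ₁ > 0 and ρ·γ₁ + √(1-ρ²)·γ₂ > 0] = 1/4 + arcsin(ρ)/(2π). -/

import Mathlib

open MeasureTheory ProbabilityTheory

section Helpers
open Real Set
open scoped ENNReal NNReal

lemma angle_iff {ρ : ℝ} (hρ : ρ ∈ Set.Icc (-1:ℝ) 1) {θ : ℝ} (hθ : θ ∈ Set.Ioo (-π) π) :
    (0 < Real.cos θ ∧ 0 < ρ * Real.cos θ + Real.sqrt (1 - ρ ^ 2) * Real.sin θ) ↔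
      θ ∈ Set.Ioo (Real.arccos ρ - π / 2) (π / 2) := by
  have hπ := Real.pi_pos
  have hα0 : 0 ≤ arccos ρ := Real.arccos_nonneg ρ
  have hαπ : arccos ρ ≤ π := Real.arccos_le_pi ρ
  have hcos : Real.cos (arccos ρ) = ρ := Real.cos_arccos hρ.1 hρ.2
  have hsin : Real.sin (arccos ρ) = Real.sqrt (1 - ρ ^ 2) := Real.sin_arccos ρ
  have key : ρ * Real.cos θ + Real.sqrt (1 - ρ ^ 2) * Real.sin θ = Real.cos (θ - arccos ρ) := by
    rw [Real.cos_sub, hcos, hsin]; ring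
  rw [key]
  obtain ⟨hθl, hθr⟩ := hθ
  constructor
  · rintro ⟨h1, h2⟩
    have hθ2 : θ < π / 2 := by
      by_contra h; push_neg at h
      exact absurd h1 (not_lt.2 (Real.cos_nonpos_of_pi_div_two_le_of_le h (by linarith)))
    have hθ1 : -(π/2) < θ := by
      by_contra h; push_neg at h
      have h' : Real.cos (-θ) ≤ 0 :=
        Real.cos_nonpos_of_pi_div_two_le_of_le (by linarith) (by linarith)
      rw [Real.cos_neg] at h'; linarith
    refine ⟨?_, hθ2⟩
    by_contra h; push_neg at h
    rw [← neg_sub, Real.cos_neg] at h2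
    have h' : Real.cos (arccos ρ - θ) ≤ 0 :=
      Real.cos_nonpos_of_pi_div_two_le_of_le (by linarith) (by linarith)
    linarith
  · rintro ⟨h1, h2⟩
    have hc : 0 < Real.cos θ := Real.cos_pos_of_mem_Ioo ⟨by linarith, h2⟩
    refine ⟨hc, Real.cos_pos_of_mem_Ioo ⟨by linarith, by linarith⟩⟩

lemma radial_integral : ∫ r in Ioi (0:ℝ), r * rexp (-r ^ 2 / 2) = 1 := by
  have hderiv : ∀ x ∈ Ici (0:ℝ), HasDerivAt (fun x : ℝ => -rexp (-x ^ 2 / 2))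
      (x * rexp (-x ^ 2 / 2)) x := by
    intro x _
    have h1 : HasDerivAt (fun x : ℝ => -x ^ 2 / 2) (-x) x := by
      have := ((hasDerivAt_pow 2 x).neg).div_const 2
      simpa using this.congr_deriv (by ring)
    have := (h1.exp).neg
    exact this.congr_deriv (by ring)
  have hint : IntegrableOn (fun r : ℝ => r * rexp (-r ^ 2 / 2)) (Ioi 0) := by
    have h := integrable_mul_exp_neg_mul_sq (b := (1:ℝ)/2) (by norm_num)
    have h' : Integrable (fun r : ℝ => r * rexp (-r ^ 2 / 2)) := by
      refine h.congr (Filter.Eventually.of_forall fun x => ?_)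
      ring_nf
    exact h'.integrableOn
  have htend : Filter.Tendsto (fun x : ℝ => -rexp (-x ^ 2 / 2)) Filter.atTop (nhds 0) := by
    rw [show (0:ℝ) = -0 by ring]
    refine (Real.tendsto_exp_atBot.comp ?_).neg
    apply Filter.Tendsto.atBot_div_const (by norm_num : (0:ℝ) < 2)
    exact Filter.tendsto_neg_atTop_atBot.comp (Filter.tendsto_pow_atTop two_ne_zero)
  have := integral_Ioi_of_hasDerivAt_of_tendsto' hderiv hint htend
  simpa using this

lemma prod_gaussian_apply (S : Set (ℝ × ℝ)) (hS : MeasurableSet S) :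
    ((gaussianReal 0 1).prod (gaussianReal 0 1)) S
      = ENNReal.ofReal (∫ p in S, gaussianPDFReal 0 1 p.1 * gaussianPDFReal 0 1 p.2) := by
  have hgm : Measurable (gaussianPDF 0 1) := measurable_gaussianPDF 0 1
  have hgauss : gaussianReal 0 1 = volume.withDensity (gaussianPDF 0 1) :=
    gaussianReal_of_var_ne_zero 0 one_ne_zero
  set G : ℝ × ℝ → ℝ≥0∞ := fun p => gaussianPDF 0 1 p.1 * gaussianPDF 0 1 p.2 with hG
  have hGm : Measurable G := (hgm.comp measurable_fst).mul (hgm.comp measurable_snd)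
  have step1 : ((gaussianReal 0 1).prod (gaussianReal 0 1)) S
      = ∫⁻ p in S, G p ∂(volume : Measure (ℝ × ℝ)) := by
    rw [hgauss, Measure.prod_apply hS]
    have hsect : ∀ x : ℝ, (volume.withDensity (gaussianPDF 0 1)) (Prod.mk x ⁻¹' S)
        = ∫⁻ y, (Prod.mk x ⁻¹' S).indicator (gaussianPDF 0 1) y := by
      intro x
      rw [withDensity_apply _ (hS.preimage measurable_prodMk_left),
        ← lintegral_indicator (hS.preimage measurable_prodMk_left)]
    calc ∫⁻ x, (volume.withDensity (gaussianPDF 0 1)) (Prod.mk x ⁻¹' S)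
          ∂(volume.withDensity (gaussianPDF 0 1))
        = ∫⁻ x, gaussianPDF 0 1 x * (volume.withDensity (gaussianPDF 0 1)) (Prod.mk x ⁻¹' S) := by
          rw [lintegral_withDensity_eq_lintegral_mul _ hgm]
          · rfl
          · exact measurable_measure_prodMk_left hS
      _ = ∫⁻ x, ∫⁻ y, S.indicator G (x, y) := by
          refine lintegral_congr fun x => ?_
          rw [hsect x, ← lintegral_const_mul _ (hgm.indicator (hS.preimage measurable_prodMk_left))]
          refine lintegral_congr fun y => ?_
          by_cases h : (x, y) ∈ S
          · rw [Set.indicator_of_mem h, Set.indicator_of_mem (by exact h)]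
          · rw [Set.indicator_of_notMem h, Set.indicator_of_notMem (by exact h), mul_zero]
      _ = ∫⁻ p, S.indicator G p ∂(volume : Measure (ℝ × ℝ)) := by
          rw [Measure.volume_eq_prod, lintegral_prod _ (hGm.indicator hS).aemeasurable]
      _ = ∫⁻ p in S, G p ∂(volume : Measure (ℝ × ℝ)) := lintegral_indicator hS _
  rw [step1]
  rw [ofReal_integral_eq_lintegral_ofReal]
  · refine lintegral_congr fun p => ?_
    rw [hG]
    rw [ENNReal.ofReal_mul (gaussianPDFReal_nonneg 0 1 p.1)]
    rfl
  · have : Integrable (fun p : ℝ × ℝ => gaussianPDFReal 0 1 p.1 * gaussianPDFReal 0 1 p.2)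
        (volume : Measure (ℝ × ℝ)) := by
      rw [Measure.volume_eq_prod]
      exact (integrable_gaussianPDFReal 0 1).mul_prod (integrable_gaussianPDFReal 0 1)
    exact this.integrableOn
  · exact Filter.Eventually.of_forall fun p =>
      mul_nonneg (gaussianPDFReal_nonneg 0 1 p.1) (gaussianPDFReal_nonneg 0 1 p.2)

end Helpers

open Real Set in
open scoped ENNReal NNReal in
/-- if `γ₁, γ₂` are independent standard Gaussian random variables and
`ρ ∈ [-1,1]`, then `P[γ₁ > 0 and ρ·γ₁ + √(1-ρ²)·γ₂ > 0] = 1/4 + arcsin(ρ)/(2π)`. -/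
theorem gaussian_quadrant_probability {Ω : Type*} [MeasurableSpace Ω]
    (P : Measure Ω) [IsProbabilityMeasure P]
    (γ₁ γ₂ : Ω → ℝ) (hγ₁ : Measurable γ₁) (hγ₂ : Measurable γ₂)
    (h₁ : Measure.map γ₁ P = gaussianReal 0 1)
    (h₂ : Measure.map γ₂ P = gaussianReal 0 1)
    (hind : IndepFun γ₁ γ₂ P)
    (ρ : ℝ) (hρ : ρ ∈ Set.Icc (-1 : ℝ) 1) :
    (P {ω | 0 < γ₁ ω ∧ 0 < ρ * γ₁ ω + Real.sqrt (1 - ρ ^ 2) * γ₂ ω}).toReal =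
      1 / 4 + Real.arcsin ρ / (2 * Real.pi) := by
  have hπ := Real.pi_pos
  obtain ⟨hρ1, hρ2⟩ := hρ
  have hα0 : 0 ≤ arccos ρ := Real.arccos_nonneg ρ
  have hαπ : arccos ρ ≤ π := Real.arccos_le_pi ρ
  set S : Set (ℝ × ℝ) := {p | 0 < p.1 ∧ 0 < ρ * p.1 + Real.sqrt (1 - ρ ^ 2) * p.2} with hSdef
  have hSm : MeasurableSet S :=
    (measurableSet_lt measurable_const measurable_fst).inter
      (measurableSet_lt measurable_const
        ((measurable_fst.const_mul ρ).add (measurable_snd.const_mul (Real.sqrt (1 - ρ ^ 2)))))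
  have hmap : Measure.map (fun ω => (γ₁ ω, γ₂ ω)) P
      = (gaussianReal 0 1).prod (gaussianReal 0 1) := by
    rw [(ProbabilityTheory.indepFun_iff_map_prod_eq_prod_map_map
      hγ₁.aemeasurable hγ₂.aemeasurable).mp hind, h₁, h₂]
  have hPS : P {ω | 0 < γ₁ ω ∧ 0 < ρ * γ₁ ω + Real.sqrt (1 - ρ ^ 2) * γ₂ ω}
      = ((gaussianReal 0 1).prod (gaussianReal 0 1)) S := by
    rw [← hmap, Measure.map_apply (hγ₁.prodMk hγ₂) hSm]
    rfl
  rw [hPS, prod_gaussian_apply S hSm]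
  have hval : ∫ p in S, gaussianPDFReal 0 1 p.1 * gaussianPDFReal 0 1 p.2
      = (π - arccos ρ) / (2 * π) := by
    rw [← integral_indicator hSm, ← integral_comp_polarCoord_symm]
    have h2π : (0:ℝ) ≤ 2 * π := by linarith
    have hcongr : EqOn
        (fun p : ℝ × ℝ => p.1 •
          S.indicator (fun q => gaussianPDFReal 0 1 q.1 * gaussianPDFReal 0 1 q.2)
            (polarCoord.symm p))
        (fun p : ℝ × ℝ => (p.1 * rexp (-p.1 ^ 2 / 2)) *
          ((2 * π)⁻¹ * (Ioo (arccos ρ - π / 2) (π / 2)).indicator (fun _ => (1:ℝ)) p.2))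
        polarCoord.target := by
      rintro ⟨r, θ⟩ hp
      simp only [polarCoord_target, Set.mem_prod, Set.mem_Ioi] at hp
      obtain ⟨hr, hθ⟩ := hp
      have hmem : polarCoord.symm (r, θ) ∈ S ↔ θ ∈ Ioo (arccos ρ - π / 2) (π / 2) := by
        rw [← angle_iff ⟨hρ1, hρ2⟩ hθ]
        simp only [polarCoord_symm_apply, hSdef, Set.mem_setOf_eq]
        have e2 : ρ * (r * Real.cos θ) + Real.sqrt (1 - ρ ^ 2) * (r * Real.sin θ)
            = r * (ρ * Real.cos θ + Real.sqrt (1 - ρ ^ 2) * Real.sin θ) := by ring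
        rw [e2, mul_pos_iff_of_pos_left hr, mul_pos_iff_of_pos_left hr]
      by_cases h : θ ∈ Ioo (arccos ρ - π / 2) (π / 2)
      · simp only [Set.indicator_of_mem (hmem.mpr h), Set.indicator_of_mem h]
        simp only [polarCoord_symm_apply, smul_eq_mul, mul_one]
        have key : gaussianPDFReal 0 1 (r * Real.cos θ) * gaussianPDFReal 0 1 (r * Real.sin θ)
            = (2 * π)⁻¹ * rexp (-r ^ 2 / 2) := by
          simp only [gaussianPDFReal, NNReal.coe_one, mul_one, sub_zero]
          rw [mul_mul_mul_comm, ← mul_inv, Real.mul_self_sqrt h2π, ← Real.exp_add]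
          congr 2
          linear_combination (-(r^2)/2) * (Real.sin_sq_add_cos_sq θ)
        rw [key]; ring
      · simp only [Set.indicator_of_notMem (fun hm => h (hmem.mp hm)),
          Set.indicator_of_notMem h, smul_zero, mul_zero]
    rw [setIntegral_congr_fun polarCoord.open_target.measurableSet hcongr]
    rw [polarCoord_target, Measure.volume_eq_prod]
    trans ((∫ r in Ioi (0:ℝ), r * rexp (-r ^ 2 / 2)) *
      ∫ θ in Ioo (-π) π, (2 * π)⁻¹ * (Ioo (arccos ρ - π / 2) (π / 2)).indicator (fun _ => (1:ℝ)) θ)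
    · exact setIntegral_prod_mul (fun r : ℝ => r * rexp (-r ^ 2 / 2))
        (fun θ : ℝ => (2 * π)⁻¹ * (Ioo (arccos ρ - π / 2) (π / 2)).indicator (fun _ => (1:ℝ)) θ)
        (Ioi 0) (Ioo (-π) π)
    rw [radial_integral, one_mul]
    rw [integral_const_mul, setIntegral_indicator measurableSet_Ioo, Set.Ioo_inter_Ioo,
      max_eq_right (by linarith : -π ≤ arccos ρ - π / 2),
      min_eq_right (by linarith : π / 2 ≤ π)]
    rw [setIntegral_const, Measure.real, Real.volume_Ioo, smul_eq_mul, mul_one,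
      ENNReal.toReal_ofReal (by linarith : (0:ℝ) ≤ π / 2 - (arccos ρ - π / 2))]
    field_simp
    ring
  rw [hval, ENNReal.toReal_ofReal (div_nonneg (by linarith) (by linarith))]
  rw [Real.arccos_eq_pi_div_two_sub_arcsin]
  field_simp
  ring
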